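/- arXiv:2012.05435 — 5 statements merged into one kernel-verified Lean document; each statement's English description precedes it below -/
import Mathlib

section
/- (Sufficient descent of one proximal-gradient step.) Let γ > L and let u_plus be a minimizer over E of u ↦ φ(u) + (γ/2)·‖u − v + (1/γ)·∇f(v)‖². Then the objective Ψ = f + φ satisfies Ψ(u_plus) + ((γ − L)/2)·‖u_plus − v‖² ≤ Ψ(v). -/
open scoped RealInnerProductSpace

lemma descent_lemma
    {E : Type*} [NormedAddCommGroup E] [InnerProductSpace ℝ E]
    (f : E → ℝ) (gradf : E → E) (L : ℝ) (hL : 0 < L)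
    (hgrad : ∀ x : E, HasFDerivAt f (innerSL ℝ (gradf x)) x)
    (hlip : ∀ x y : E, ‖gradf x - gradf y‖ ≤ L * ‖x - y‖)
    (v u : E) :
    f u ≤ f v + ⟪gradf v, u - v⟫ + (L / 2) * ‖u - v‖ ^ 2 := by
  set w := u - v with hw
  set g : ℝ → ℝ := fun t => f (v + t • w) - t * ⟪gradf v, w⟫ - t ^ 2 * (L / 2) * ‖w‖ ^ 2
    with hg
  have hline : ∀ t : ℝ, HasDerivAt (fun t : ℝ => v + t • w) w t := by
    intro t
    simpa using ((hasDerivAt_id t).smul_const w).const_add v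
  have hgd : ∀ t : ℝ, HasDerivAt g
      (⟪gradf (v + t • w), w⟫ - ⟪gradf v, w⟫ - 2 * t * (L / 2) * ‖w‖ ^ 2) t := by
    intro t
    have h1 : HasDerivAt (fun t : ℝ => f (v + t • w)) ⟪gradf (v + t • w), w⟫ t := by
      have := (hgrad (v + t • w)).comp_hasDerivAt t (hline t)
      exact this
    have h2 : HasDerivAt (fun t : ℝ => t * ⟪gradf v, w⟫) ⟪gradf v, w⟫ t := by
      simpa using (hasDerivAt_id t).mul_const ⟪gradf v, w⟫
    have h3 : HasDerivAt (fun t : ℝ => t ^ 2 * (L / 2) * ‖w‖ ^ 2)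
        (2 * t * (L / 2) * ‖w‖ ^ 2) t := by
      have := ((hasDerivAt_pow 2 t).mul_const (L / 2)).mul_const (‖w‖ ^ 2)
      simpa [mul_comm, mul_assoc, mul_left_comm] using this
    exact (h1.sub h2).sub h3
  have hanti : AntitoneOn g (Set.Icc (0:ℝ) 1) := by
    apply antitoneOn_of_deriv_nonpos (convex_Icc 0 1)
    · exact fun t _ => ((hgd t).differentiableAt.continuousAt.continuousWithinAt)
    · exact fun t _ => ((hgd t).differentiableAt.differentiableWithinAt)
    · intro t ht
      rw [interior_Icc] at ht
      rw [(hgd t).deriv]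
      have key : ⟪gradf (v + t • w) - gradf v, w⟫ ≤ L * t * ‖w‖ ^ 2 := by
        calc ⟪gradf (v + t • w) - gradf v, w⟫ ≤ ‖gradf (v + t • w) - gradf v‖ * ‖w‖ :=
              real_inner_le_norm _ _
          _ ≤ (L * ‖(v + t • w) - v‖) * ‖w‖ := by
              gcongr
              exact hlip _ _
          _ = L * t * ‖w‖ ^ 2 := by
              rw [add_sub_cancel_left, norm_smul, Real.norm_of_nonneg ht.1.le]
              ring
      have heq : ⟪gradf (v + t • w), w⟫ - ⟪gradf v, w⟫
          = ⟪gradf (v + t • w) - gradf v, w⟫ := by rw [inner_sub_left]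
      rw [heq]
      nlinarith [key]
  have h01 : g 1 ≤ g 0 := hanti (Set.mem_Icc.2 ⟨le_refl 0, zero_le_one⟩)
    (Set.mem_Icc.2 ⟨zero_le_one, le_refl 1⟩) zero_le_one
  have hvu : v + (1:ℝ) • w = u := by rw [one_smul, hw]; abel
  have hvw : v + w = u := by rw [hw]; abel
  norm_num [hg, hvw] at h01
  linarith

/-- Sufficient descent of one proximal-gradient step: if `γ > L`
and `u_plus` minimizes `u ↦ φ u + (γ/2)·‖u − v + (1/γ)·∇f(v)‖²`, then
`Ψ(u_plus) + ((γ − L)/2)·‖u_plus − v‖² ≤ Ψ(v)` where `Ψ = f + φ`. -/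
theorem stmt2
    {E : Type*} [NormedAddCommGroup E] [InnerProductSpace ℝ E]
    (f : E → ℝ) (φ : E → ℝ) (gradf : E → E) (L : ℝ)
    (hL : 0 < L)
    (hgrad : ∀ x : E, HasFDerivAt f (innerSL ℝ (gradf x)) x)
    (hlip : ∀ x y : E, ‖gradf x - gradf y‖ ≤ L * ‖x - y‖)
    (γ : ℝ) (hγ : γ > L) (v : E) (u_plus : E)
    (hmin : ∀ u : E,
      φ u_plus + (γ / 2) * ‖u_plus - v + (1 / γ) • gradf v‖ ^ 2 ≤
        φ u + (γ / 2) * ‖u - v + (1 / γ) • gradf v‖ ^ 2) :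
    (f u_plus + φ u_plus) + ((γ - L) / 2) * ‖u_plus - v‖ ^ 2 ≤ f v + φ v := by
  have hγ0 : (0:ℝ) < γ := hL.trans hγ
  have hdesc := descent_lemma f gradf L hL hgrad hlip v u_plus
  have hm := hmin v
  have expand : ‖u_plus - v + (1 / γ) • gradf v‖ ^ 2
      = ‖u_plus - v‖ ^ 2 + 2 * (1 / γ) * ⟪gradf v, u_plus - v⟫
        + (1 / γ) ^ 2 * ‖gradf v‖ ^ 2 := by
    rw [norm_add_sq_real, norm_smul, real_inner_smul_right,
      Real.norm_of_nonneg (by positivity : (0:ℝ) ≤ 1 / γ), real_inner_comm]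
    ring
  have expand2 : ‖v - v + (1 / γ) • gradf v‖ ^ 2 = (1 / γ) ^ 2 * ‖gradf v‖ ^ 2 := by
    rw [sub_self, zero_add, norm_smul, Real.norm_of_nonneg (by positivity : (0:ℝ) ≤ 1 / γ)]
    ring
  rw [expand, expand2] at hm
  have hγne : γ ≠ 0 := ne_of_gt hγ0
  have hm' : φ u_plus + (γ / 2) * ‖u_plus - v‖ ^ 2 + ⟪gradf v, u_plus - v⟫ ≤ φ v := by
    have : (γ / 2) * (2 * (1 / γ) * ⟪gradf v, u_plus - v⟫) = ⟪gradf v, u_plus - v⟫ := by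
      field_simp
    nlinarith [hm]
  linarith
end

section
/- (Fixed points of the proximal-gradient step are minimizers.) Let f be convex and φ be convex, and let γ > 0. If u* ∈ E minimizes over E the objective u ↦ φ(u) + (γ/2)·‖u − u* + (1/γ)·∇f(u*)‖² (i.e. u* is a fixed point of the proximal-gradient step based at itself), then u* is a global minimizer of Ψ = f + φ over E. -/
open scoped RealInnerProductSpace

/-- Gradient inequality for a convex differentiable function. -/
lemma grad_ineq
    {E : Type*} [NormedAddCommGroup E] [InnerProductSpace ℝ E]
    (f : E → ℝ) (gradf : E → E)
    (hf : ConvexOn ℝ Set.univ f)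
    (hgrad : ∀ x : E, HasFDerivAt f (innerSL ℝ (gradf x)) x)
    (x u : E) : f x + ⟪gradf x, u - x⟫ ≤ f u := by
  set h : ℝ → ℝ := fun t => f (x + t • (u - x)) with hh
  have hcv : ConvexOn ℝ Set.univ h := by
    have h0 := hf.comp_affineMap (AffineMap.lineMap x u : ℝ →ᵃ[ℝ] E)
    have hfun : (f ∘ ⇑(AffineMap.lineMap x u)) = h :=
      funext fun t => by simp [hh, AffineMap.lineMap_apply, add_comm]
    rw [hfun, Set.preimage_univ] at h0
    exact h0
  have hc : HasDerivAt (fun t : ℝ => x + t • (u - x)) (u - x) 0 := by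
    simpa using ((hasDerivAt_id (0:ℝ)).smul_const (u - x)).const_add x
  have hd : HasDerivAt h ⟪gradf x, u - x⟫ 0 := by
    have := (hgrad (x + (0:ℝ) • (u - x))).comp_hasDerivAt 0 hc
    exact (by simpa using this : HasDerivAt (f ∘ fun t : ℝ => x + t • (u - x)) ⟪gradf x, u - x⟫ 0)
  have hs := hcv.le_slope_of_hasDerivAt (Set.mem_univ 0) (Set.mem_univ 1)
    zero_lt_one hd
  have hslope : slope h 0 1 = f u - f x := by
    simp [slope_def_field, hh]
  rw [hslope] at hs
  linarith

/-- Fixed points of the proximal-gradient step are minimizers: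
if `f` and `φ` are convex, `γ > 0`, and `u_star` minimizes
`u ↦ φ u + (γ/2)·‖u − u_star + (1/γ)·∇f(u_star)‖²`, then `u_star` is a global
minimizer of `Ψ = f + φ`. -/
theorem stmt5
    {E : Type*} [NormedAddCommGroup E] [InnerProductSpace ℝ E]
    (f : E → ℝ) (φ : E → ℝ) (gradf : E → E)
    (hf : ConvexOn ℝ Set.univ f)
    (hgrad : ∀ x : E, HasFDerivAt f (innerSL ℝ (gradf x)) x)
    (hφ : ConvexOn ℝ Set.univ φ)
    (γ : ℝ) (hγ : 0 < γ) (u_star : E)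
    (hmin : ∀ u : E,
      φ u_star + (γ / 2) * ‖u_star - u_star + (1 / γ) • gradf u_star‖ ^ 2 ≤
        φ u + (γ / 2) * ‖u - u_star + (1 / γ) • gradf u_star‖ ^ 2) :
    ∀ u : E, f u_star + φ u_star ≤ f u + φ u := by
  intro u
  set g := gradf u_star with hg
  -- Step 1: φ u_star ≤ φ u + ⟪g, u - u_star⟫
  have key : ∀ t : ℝ, t ∈ Set.Ioc (0:ℝ) 1 →
      φ u_star ≤ φ u + ⟪g, u - u_star⟫ + (γ * t / 2) * ‖u - u_star‖ ^ 2 := by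
    intro t ht
    obtain ⟨ht0, ht1⟩ := ht
    set v := u - u_star with hv
    have h1 := hmin (u_star + t • v)
    have hrw : u_star + t • v - u_star = t • v := by abel
    rw [hrw] at h1
    have hexp : ‖t • v + (1 / γ) • g‖ ^ 2
        = t ^ 2 * ‖v‖ ^ 2 + 2 * (t / γ) * ⟪v, g⟫ + ‖(1 / γ) • g‖ ^ 2 := by
      rw [norm_add_sq_real]
      rw [norm_smul, real_inner_smul_left, real_inner_smul_right]
      have : (‖t‖ * ‖v‖) ^ 2 = t ^ 2 * ‖v‖ ^ 2 := by
        rw [mul_pow, Real.norm_eq_abs, sq_abs]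
      rw [this]
      ring
    have h2 : φ u_star ≤ φ (u_star + t • v)
        + (γ / 2) * (t ^ 2 * ‖v‖ ^ 2 + 2 * (t / γ) * ⟪v, g⟫) := by
      have : u_star - u_star + (1/γ) • g = (1/γ) • g := by abel
      rw [this] at h1
      rw [hexp] at h1
      linarith
    have hconv : φ (u_star + t • v) ≤ (1 - t) * φ u_star + t * φ u := by
      have := hφ.2 (Set.mem_univ u_star) (Set.mem_univ u)
        (by linarith : (0:ℝ) ≤ 1 - t) (le_of_lt ht0) (by ring)
      have heq : (1 - t) • u_star + t • u = u_star + t • v := by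
        rw [hv]; rw [smul_sub]; module
      rw [heq] at this
      simpa using this
    have hγ' : γ ≠ 0 := ne_of_gt hγ
    have hinner : (γ / 2) * (2 * (t / γ) * ⟪v, g⟫) = t * ⟪v, g⟫ := by
      field_simp
    have h3 : t * φ u_star ≤ t * φ u + (γ / 2) * t ^ 2 * ‖v‖ ^ 2 + t * ⟪v, g⟫ := by
      nlinarith [h2, hconv]
    have h4 : φ u_star ≤ φ u + (γ * t / 2) * ‖v‖ ^ 2 + ⟪v, g⟫ := by
      have := mul_le_mul_of_nonneg_left h3 (le_of_lt (inv_pos.mpr ht0))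
      rw [mul_add, mul_add, ← mul_assoc, ← mul_assoc, ← mul_assoc,
        inv_mul_cancel₀ (ne_of_gt ht0), one_mul, one_mul] at this
      have ht' : t ≠ 0 := ne_of_gt ht0
      have e1 : t⁻¹ * ((γ / 2) * t ^ 2) = γ * t / 2 := by
        field_simp
      nlinarith [this]
    calc φ u_star ≤ φ u + (γ * t / 2) * ‖v‖ ^ 2 + ⟪v, g⟫ := h4
      _ = φ u + ⟪g, u - u_star⟫ + (γ * t / 2) * ‖u - u_star‖ ^ 2 := by
          rw [real_inner_comm]; ring
  have step1 : φ u_star ≤ φ u + ⟪g, u - u_star⟫ := by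
    have htend : Filter.Tendsto
        (fun t : ℝ => φ u + ⟪g, u - u_star⟫ + (γ * t / 2) * ‖u - u_star‖ ^ 2)
        (nhdsWithin 0 (Set.Ioi 0)) (nhds (φ u + ⟪g, u - u_star⟫)) := by
      have hc : Continuous
          (fun t : ℝ => φ u + ⟪g, u - u_star⟫ + (γ * t / 2) * ‖u - u_star‖ ^ 2) := by
        continuity
      have := (hc.tendsto 0).mono_left (nhdsWithin_le_nhds (s := Set.Ioi (0:ℝ)))
      simpa using this
    apply ge_of_tendsto htend
    filter_upwards [Ioc_mem_nhdsGT_of_mem (Set.mem_Ico.mpr ⟨le_refl 0, zero_lt_one⟩)]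
      with t ht
    exact key t ht
  -- Step 2: gradient inequality
  have step2 : f u_star + ⟪g, u - u_star⟫ ≤ f u :=
    grad_ineq f gradf hf hgrad u_star u
  linarith
end

section
/- (Proposition 2: fixed-point convergence of the propagative control mechanism for partially-defined models.) Let γ^0 > 0, η > 1, c > 0, L > 0, and set γ^t = γ^0·η^t. Let (u^t), (u_d^{t+1}), (u_c^{t+1}) be sequences in E such that for every t: (i) ‖u_d^{t+1} − u^t‖ ≤ √(c/γ^t) (the bounded-perturbation condition on the composed generative–discriminative operator applied to u^t); (ii) ∇f(u_c^{t+1}) + γ^t·(u_c^{t+1} − u_d^{t+1}) = 0 (the first-order optimality condition of the correction step); and (iii) u^{t+1} = u_c^{t+1} if ‖∇f(u_c^{t+1})‖ ≤ L and u^{t+1} = u^t otherwise (the optimality-checking rule). Then (u^t) is a Cauchy sequence and converges to some fixed point u* ∈ E. -/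
open scoped RealInnerProductSpace

private lemma sqrt_pow_aux (x : ℝ) (hx : 0 ≤ x) (n : ℕ) :
    Real.sqrt (x ^ n) = Real.sqrt x ^ n := by
  induction n with
  | zero => simp
  | succ n ih => rw [pow_succ, pow_succ, Real.sqrt_mul (by positivity), ih]

/-- Proposition 2: fixed-point convergence of the propagative
control mechanism for partially-defined models: with `γ t = γ0·η^t`, the
bounded-perturbation condition, the first-order optimality of the correction,
and the optimality-checking rule, the sequence `u` is Cauchy and converges. -/
theorem stmt9
    {E : Type*} [NormedAddCommGroup E] [InnerProductSpace ℝ E] [CompleteSpace E]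
    (f : E → ℝ) (gradf : E → E)
    (hgrad : ∀ x : E, HasFDerivAt f (innerSL ℝ (gradf x)) x)
    (γ0 η c L : ℝ) (hγ0 : 0 < γ0) (hη : 1 < η) (hc : 0 < c) (hL : 0 < L)
    (γ : ℕ → ℝ) (hγ : ∀ t : ℕ, γ t = γ0 * η ^ t)
    (u u_d u_c : ℕ → E)
    (hbound : ∀ t : ℕ, ‖u_d (t + 1) - u t‖ ≤ Real.sqrt (c / γ t))
    (hopt : ∀ t : ℕ,
      gradf (u_c (t + 1)) + γ t • (u_c (t + 1) - u_d (t + 1)) = 0)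
    (hcheck : ∀ t : ℕ,
      u (t + 1) = if ‖gradf (u_c (t + 1))‖ ≤ L then u_c (t + 1) else u t) :
    CauchySeq u ∧ ∃ u_star : E, Filter.Tendsto u Filter.atTop (nhds u_star) := by
  have hη0 : (0 : ℝ) < η := lt_trans one_pos hη
  set r : ℝ := (Real.sqrt η)⁻¹ with hrdef
  have hsη : 1 < Real.sqrt η := by
    have := Real.sqrt_lt_sqrt zero_le_one hη
    simpa using this
  have hsη0 : 0 < Real.sqrt η := lt_trans one_pos hsη
  have hr1 : r < 1 := by
    rw [hrdef]
    exact inv_lt_one_of_one_lt₀ hsη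
  have hr0 : 0 < r := inv_pos.mpr hsη0
  set C : ℝ := L / γ0 + Real.sqrt (c / γ0) with hCdef
  have key : ∀ t, dist (u t) (u (t + 1)) ≤ C * r ^ t := by
    intro t
    have hγt : γ t = γ0 * η ^ t := hγ t
    have hγtpos : 0 < γ t := by rw [hγt]; positivity
    have hCr : 0 ≤ C * r ^ t := by
      have : 0 ≤ C := by rw [hCdef]; positivity
      positivity
    rw [dist_eq_norm, hcheck t]
    by_cases h : ‖gradf (u_c (t + 1))‖ ≤ L
    · rw [if_pos h]
      have heq : γ t • (u_c (t + 1) - u_d (t + 1)) = -gradf (u_c (t + 1)) := by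
        have h0 := hopt t
        rw [add_eq_zero_iff_eq_neg] at h0
        rw [h0]; simp
      have hnorm : γ t * ‖u_c (t + 1) - u_d (t + 1)‖ = ‖gradf (u_c (t + 1))‖ := by
        have := congrArg norm heq
        rwa [norm_smul, Real.norm_eq_abs, abs_of_pos hγtpos, norm_neg] at this
      have h2 : ‖u_c (t + 1) - u_d (t + 1)‖ ≤ L / γ t := by
        rw [le_div_iff₀ hγtpos]
        nlinarith
      have h3 : ‖u t - u_c (t + 1)‖ ≤ Real.sqrt (c / γ t) + L / γ t := by
        have htri := dist_triangle (u t) (u_d (t + 1)) (u_c (t + 1))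
        rw [dist_eq_norm, dist_eq_norm, dist_eq_norm] at htri
        have e1 : ‖u t - u_d (t + 1)‖ = ‖u_d (t + 1) - u t‖ := norm_sub_rev _ _
        have e2 : ‖u_d (t + 1) - u_c (t + 1)‖ = ‖u_c (t + 1) - u_d (t + 1)‖ :=
          norm_sub_rev _ _
        rw [e1, e2] at htri
        linarith [hbound t]
      -- geometric bounds
      have hηinv : (0:ℝ) ≤ η⁻¹ := by positivity
      have hs1 : Real.sqrt (c / γ t) = Real.sqrt (c / γ0) * r ^ t := by
        have : c / γ t = (c / γ0) * (η⁻¹) ^ t := by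
          rw [hγt]; field_simp
          rw [← mul_pow, mul_one_div_cancel hη0.ne', one_pow]
        rw [this, Real.sqrt_mul (by positivity), sqrt_pow_aux _ hηinv, Real.sqrt_inv]
      have hs2 : L / γ t ≤ L / γ0 * r ^ t := by
        have hle : η⁻¹ ≤ r := by
          rw [hrdef]
          refine inv_anti₀ hsη0 ?_
          calc Real.sqrt η ≤ Real.sqrt (η * η) :=
                Real.sqrt_le_sqrt (le_mul_of_one_le_left (le_of_lt hη0) hη.le)
            _ = η := Real.sqrt_mul_self hη0.le
        have hpow : (η⁻¹) ^ t ≤ r ^ t := pow_le_pow_left₀ hηinv hle t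
        have : L / γ t = L / γ0 * (η⁻¹) ^ t := by
          rw [hγt]; field_simp
          rw [← mul_pow, mul_one_div_cancel hη0.ne', one_pow]
        rw [this]
        have hL0 : 0 ≤ L / γ0 := by positivity
        exact mul_le_mul_of_nonneg_left hpow hL0
      calc ‖u t - u_c (t + 1)‖ ≤ Real.sqrt (c / γ t) + L / γ t := h3
        _ ≤ Real.sqrt (c / γ0) * r ^ t + L / γ0 * r ^ t := by
            rw [hs1]; linarith
        _ = C * r ^ t := by rw [hCdef]; ring
    · rw [if_neg h]
      simpa using hCr
  have hcau : CauchySeq u := cauchySeq_of_le_geometric r C hr1 key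
  refine ⟨hcau, ?_⟩
  exact cauchySeq_tendsto_of_complete hcau
end

section
/- (Squared-norm estimate for the gradient step.) Suppose f is ρ-strongly convex (i.e. u ↦ f(u) − (ρ/2)·‖u‖² is convex) with ρ > 0 and ∇f is Lipschitz continuous with constant L > 0. For γ > 0 define the gradient-step map G_γ(x) := x − (1/γ)·∇f(x). Then for all x, y ∈ E, ‖G_γ(x) − G_γ(y)‖² ≤ (1 − 2ρL/(γ·(ρ + L)))·‖x − y‖² + ((1/γ)² − 2/(γ·(ρ + L)))·‖∇f(x) − ∇f(y)‖². -/
open scoped RealInnerProductSpace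

section aux
variable {E : Type*} [NormedAddCommGroup E] [InnerProductSpace ℝ E]

private lemma lineDeriv' (f : E → ℝ) (g : E → E)
    (hg : ∀ x : E, HasFDerivAt f (innerSL ℝ (g x)) x) (x v : E) (t : ℝ) :
    HasDerivAt (fun s : ℝ => f (x + s • v)) ⟪g (x + t • v), v⟫ t := by
  have h1 : HasDerivAt (fun s : ℝ => x + s • v) v t := by
    simpa using ((hasDerivAt_id t).smul_const v).const_add x
  have := (hg (x + t • v)).comp_hasDerivAt t h1
  simp only [innerSL_apply_apply] at this
  exact this

private lemma convexOn_line' {f : E → ℝ} (hconv : ConvexOn ℝ Set.univ f) (x v : E) :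
    ConvexOn ℝ Set.univ (fun s : ℝ => f (x + s • v)) := by
  refine ⟨convex_univ, fun a _ b _ σ τ hσ hτ hστ => ?_⟩
  have hx : σ • (x + a • v) + τ • (x + b • v) = (σ + τ) • x + (σ * a + τ * b) • v := by
    module
  have h2 := hconv.2 (Set.mem_univ (x + a • v)) (Set.mem_univ (x + b • v)) hσ hτ hστ
  rw [hx, hστ, one_smul] at h2
  simpa using h2

private lemma grad_ineq' {f : E → ℝ} {g : E → E}
    (hconv : ConvexOn ℝ Set.univ f)
    (hg : ∀ x : E, HasFDerivAt f (innerSL ℝ (g x)) x) (x y : E) :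
    f x + ⟪g x, y - x⟫ ≤ f y := by
  have hF := convexOn_line' hconv x (y - x)
  have hd := lineDeriv' f g hg x (y - x) 0
  simp only [zero_smul, add_zero] at hd
  have h := hF.le_slope_of_hasDerivAt (Set.mem_univ (0:ℝ)) (Set.mem_univ (1:ℝ)) one_pos hd
  rw [slope_def_field] at h
  simp only [zero_smul, add_zero, one_smul, add_sub_cancel, sub_zero, div_one] at h
  linarith

private lemma convex_of_monotone_grad' {f : E → ℝ} {g : E → E}
    (hg : ∀ x : E, HasFDerivAt f (innerSL ℝ (g x)) x)
    (hmono : ∀ x y : E, 0 ≤ ⟪g x - g y, x - y⟫) :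
    ConvexOn ℝ Set.univ f := by
  refine ⟨convex_univ, fun x _ y _ σ τ hσ hτ hστ => ?_⟩
  set v := y - x with hv
  have hFd : ∀ t : ℝ, HasDerivAt (fun s : ℝ => f (x + s • v)) ⟪g (x + t • v), v⟫ t :=
    lineDeriv' f g hg x v
  have hF : ConvexOn ℝ Set.univ (fun s : ℝ => f (x + s • v)) := by
    apply MonotoneOn.convexOn_of_deriv convex_univ
    · exact fun t _ => (hFd t).differentiableAt.continuousAt.continuousWithinAt
    · exact fun t _ => (hFd t).differentiableAt.differentiableWithinAt
    · rw [interior_univ]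
      intro s _ t _ hst
      rw [(hFd s).deriv, (hFd t).deriv]
      rcases eq_or_lt_of_le hst with rfl | h
      · exact le_refl _
      · have hm := hmono (x + t • v) (x + s • v)
        have hsub : (x + t • v) - (x + s • v) = (t - s) • v := by module
        rw [hsub, real_inner_smul_right, inner_sub_left] at hm
        nlinarith
  have h01 := hF.2 (Set.mem_univ (0:ℝ)) (Set.mem_univ (1:ℝ)) hσ hτ hστ
  simp only [smul_eq_mul, mul_zero, mul_one, zero_add, zero_smul, add_zero, one_smul] at h01
  have hx2 : x + τ • (y - x) = σ • x + τ • y := by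
    rw [show σ = 1 - τ by linarith]; module
  rw [hx2] at h01
  have hxv : x + v = y := by rw [hv]; abel
  rw [hxv] at h01
  simpa using h01

private lemma quad_sub_grad' {f : E → ℝ} {g : E → E}
    (hg : ∀ x : E, HasFDerivAt f (innerSL ℝ (g x)) x) (c : ℝ) (z : E) :
    HasFDerivAt (fun u : E => c / 2 * ‖u‖ ^ 2 - f u) (innerSL ℝ (c • z - g z)) z := by
  have h1 : HasFDerivAt (fun u : E => ‖u‖ ^ 2) (2 • (innerSL ℝ z)) z :=
    (hasStrictFDerivAt_norm_sq z).hasFDerivAt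
  have h2 := (h1.const_mul (c / 2)).sub (hg z)
  convert h2 using 1
  · rfl
  · rfl
  · rfl
  ext w
  simp [inner_sub_left, real_inner_smul_left]
  ring

private lemma descent' {f : E → ℝ} {g : E → E} {c : ℝ}
    (hg : ∀ x : E, HasFDerivAt f (innerSL ℝ (g x)) x)
    (hq : ConvexOn ℝ Set.univ (fun u : E => c / 2 * ‖u‖ ^ 2 - f u)) (x y : E) :
    f y ≤ f x + ⟪g x, y - x⟫ + c / 2 * ‖y - x‖ ^ 2 := by
  have h := grad_ineq' hq (quad_sub_grad' hg c) x y
  simp only [inner_sub_left, inner_sub_right, real_inner_smul_left,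
    real_inner_self_eq_norm_sq] at h
  rw [norm_sub_sq_real]
  rw [inner_sub_right]
  have hcomm : ⟪y, x⟫ = ⟪x, y⟫ := real_inner_comm _ _
  rw [hcomm]
  nlinarith [h]

private lemma lower_bound' {f : E → ℝ} {g : E → E} {c : ℝ} (hc : 0 < c)
    (hconv : ConvexOn ℝ Set.univ f)
    (hq : ConvexOn ℝ Set.univ (fun u : E => c / 2 * ‖u‖ ^ 2 - f u))
    (hg : ∀ x : E, HasFDerivAt f (innerSL ℝ (g x)) x) (x y : E) :
    f x + ⟪g x, y - x⟫ + 1 / (2 * c) * ‖g y - g x‖ ^ 2 ≤ f y := by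
  set w := y - (1 / c) • (g y - g x) with hw
  have h1 := grad_ineq' hconv hg x w
  have h2 := descent' hg hq y w
  have hwy : w - y = -((1 / c) • (g y - g x)) := by rw [hw]; abel
  have hwx : w - x = (y - x) - (1 / c) • (g y - g x) := by rw [hw]; abel
  rw [hwx, inner_sub_right, real_inner_smul_right] at h1
  rw [hwy, inner_neg_right, real_inner_smul_right, norm_neg, norm_smul,
    Real.norm_eq_abs, abs_of_pos (by positivity : (0:ℝ) < 1 / c)] at h2
  have he : ⟪g y, g y - g x⟫ - ⟪g x, g y - g x⟫ = ‖g y - g x‖ ^ 2 := by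
    rw [← inner_sub_left, real_inner_self_eq_norm_sq]
  have hcc : c / 2 * (1 / c * ‖g y - g x‖) ^ 2 = 1 / (2 * c) * ‖g y - g x‖ ^ 2 := by
    field_simp
  rw [hcc] at h2
  have h3 : 1 / c * ‖g y - g x‖ ^ 2 = 1 / c * ⟪g y, g y - g x⟫ - 1 / c * ⟪g x, g y - g x⟫ := by
    rw [← he]; ring
  have h4 : 1 / (2 * c) * ‖g y - g x‖ ^ 2 = 1 / 2 * (1 / c * ‖g y - g x‖ ^ 2) := by
    field_simp
  linarith

private lemma cocoercive' {f : E → ℝ} {g : E → E} {c : ℝ} (hc : 0 < c)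
    (hconv : ConvexOn ℝ Set.univ f)
    (hq : ConvexOn ℝ Set.univ (fun u : E => c / 2 * ‖u‖ ^ 2 - f u))
    (hg : ∀ x : E, HasFDerivAt f (innerSL ℝ (g x)) x) (x y : E) :
    1 / c * ‖g x - g y‖ ^ 2 ≤ ⟪g x - g y, x - y⟫ := by
  have h1 := lower_bound' hc hconv hq hg x y
  have h2 := lower_bound' hc hconv hq hg y x
  rw [norm_sub_rev] at h1
  simp only [inner_sub_left, inner_sub_right] at h1 h2 ⊢
  have h4 : 1 / (2 * c) * ‖g x - g y‖ ^ 2 = 1 / 2 * (1 / c * ‖g x - g y‖ ^ 2) := by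
    field_simp
  linarith

end aux

/-- Squared-norm estimate for the gradient step: for the
gradient-step map `G_γ(x) = x − (1/γ)·∇f(x)` of a `ρ`-strongly convex function
with `L`-Lipschitz gradient and `γ > 0`,
`‖G_γ(x) − G_γ(y)‖² ≤ (1 − 2ρL/(γ(ρ+L)))·‖x−y‖² + ((1/γ)² − 2/(γ(ρ+L)))·‖∇f(x)−∇f(y)‖²`. -/
theorem stmt13
    {E : Type*} [NormedAddCommGroup E] [InnerProductSpace ℝ E]
    (f : E → ℝ) (gradf : E → E)
    (hgrad : ∀ x : E, HasFDerivAt f (innerSL ℝ (gradf x)) x)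
    (ρ L : ℝ) (hρ : 0 < ρ) (hL : 0 < L)
    (hsc : ConvexOn ℝ Set.univ (fun u : E => f u - (ρ / 2) * ‖u‖ ^ 2))
    (hlip : ∀ x y : E, ‖gradf x - gradf y‖ ≤ L * ‖x - y‖)
    (γ : ℝ) (hγ : 0 < γ)
    (G : E → E) (hG : ∀ x : E, G x = x - (1 / γ) • gradf x) :
    ∀ x y : E, ‖G x - G y‖ ^ 2 ≤
      (1 - 2 * ρ * L / (γ * (ρ + L))) * ‖x - y‖ ^ 2 +
        ((1 / γ) ^ 2 - 2 / (γ * (ρ + L))) * ‖gradf x - gradf y‖ ^ 2 := by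
  -- gradient of h = f - (ρ/2)‖·‖²
  have hgh : ∀ z : E, HasFDerivAt (fun u : E => f u - ρ / 2 * ‖u‖ ^ 2)
      (innerSL ℝ (gradf z - ρ • z)) z := by
    intro z
    have h1 := quad_sub_grad' hgrad ρ z
    have h2 := h1.neg
    convert h2 using 1
    · rfl
    · rfl
    · funext u; rw [Pi.neg_apply]; ring
    · ext w; simp [inner_sub_left, real_inner_smul_left]
  have hh : ConvexOn ℝ Set.univ (fun u : E => f u - ρ / 2 * ‖u‖ ^ 2) := by
    convert hsc using 2
  -- strong monotonicity
  have mono : ∀ a b : E, ρ * ‖a - b‖ ^ 2 ≤ ⟪gradf a - gradf b, a - b⟫ := by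
    intro a b
    have h1 := grad_ineq' hh hgh a b
    have h2 := grad_ineq' hh hgh b a
    have h3 : ⟪gradf a - ρ • a, b - a⟫ + ⟪gradf b - ρ • b, a - b⟫ ≤ 0 := by linarith
    have e1 : ⟪gradf a - ρ • a, b - a⟫ = -⟪gradf a - ρ • a, a - b⟫ := by
      rw [← inner_neg_right, neg_sub]
    rw [e1] at h3
    have e2 : ⟪gradf a - ρ • a, a - b⟫ - ⟪gradf b - ρ • b, a - b⟫ =
        ⟪gradf a - gradf b, a - b⟫ - ρ * ‖a - b‖ ^ 2 := by
      rw [← inner_sub_left, show (gradf a - ρ • a) - (gradf b - ρ • b) =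
        (gradf a - gradf b) - ρ • (a - b) by module, inner_sub_left,
        real_inner_smul_left, real_inner_self_eq_norm_sq]
    linarith
  -- key interpolation inequality
  have key : ∀ a b : E, ρ * L * ‖a - b‖ ^ 2 + ‖gradf a - gradf b‖ ^ 2 ≤
      (ρ + L) * ⟪gradf a - gradf b, a - b⟫ := by
    intro a b
    rcases lt_or_ge ρ L with hlt | hge
    · -- convexity of (L/2)‖·‖² - f
      have hq0 : ConvexOn ℝ Set.univ (fun u : E => L / 2 * ‖u‖ ^ 2 - f u) := by
        apply convex_of_monotone_grad' (g := fun z : E => L • z - gradf z)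
          (quad_sub_grad' hgrad L)
        intro p q
        have e : (L • p - gradf p) - (L • q - gradf q) =
            L • (p - q) - (gradf p - gradf q) := by module
        rw [e, inner_sub_left, real_inner_smul_left, real_inner_self_eq_norm_sq]
        nlinarith [real_inner_le_norm (gradf p - gradf q) (p - q), hlip p q,
          norm_nonneg (p - q), norm_nonneg (gradf p - gradf q)]
      have hq : ConvexOn ℝ Set.univ
          (fun u : E => (L - ρ) / 2 * ‖u‖ ^ 2 - (f u - ρ / 2 * ‖u‖ ^ 2)) := by
        convert hq0 using 2 with u
        ring
      have hco := cocoercive' (sub_pos.2 hlt) hh hq hgh a b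
      have e : (gradf a - ρ • a) - (gradf b - ρ • b) =
          (gradf a - gradf b) - ρ • (a - b) := by module
      rw [e] at hco
      rw [inner_sub_left, real_inner_smul_left, real_inner_self_eq_norm_sq] at hco
      have hn : ‖(gradf a - gradf b) - ρ • (a - b)‖ ^ 2 =
          ‖gradf a - gradf b‖ ^ 2 - 2 * (ρ * ⟪gradf a - gradf b, a - b⟫)
            + ρ ^ 2 * ‖a - b‖ ^ 2 := by
        rw [norm_sub_sq_real, real_inner_smul_right, norm_smul, Real.norm_eq_abs,
          mul_pow, sq_abs]
      rw [hn] at hco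
      rw [div_mul_eq_mul_div, div_le_iff₀ (sub_pos.2 hlt), one_mul] at hco
      nlinarith [hco]
    · -- L ≤ ρ case
      have h1 := mono a b
      have h2 := hlip a b
      have h3 : ‖gradf a - gradf b‖ ^ 2 ≤ L ^ 2 * ‖a - b‖ ^ 2 := by
        nlinarith [norm_nonneg (gradf a - gradf b), norm_nonneg (a - b)]
      have hsq : L ^ 2 ≤ ρ ^ 2 := by nlinarith
      have h4 : ‖gradf a - gradf b‖ ^ 2 ≤ ρ ^ 2 * ‖a - b‖ ^ 2 :=
        le_trans h3 (mul_le_mul_of_nonneg_right hsq (sq_nonneg _))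
      have h5 := mul_le_mul_of_nonneg_left h1 hρ.le
      have h6 := mul_le_mul_of_nonneg_left h1 hL.le
      nlinarith [h4, h5, h6]
  intro x y
  rw [hG x, hG y]
  have e : (x - (1 / γ) • gradf x) - (y - (1 / γ) • gradf y) =
      (x - y) - (1 / γ) • (gradf x - gradf y) := by module
  rw [e, norm_sub_sq_real, real_inner_smul_right, norm_smul, Real.norm_eq_abs,
    mul_pow, sq_abs]
  have hcomm : ⟪x - y, gradf x - gradf y⟫ = ⟪gradf x - gradf y, x - y⟫ :=
    real_inner_comm _ _
  rw [hcomm]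
  have hpos : (0:ℝ) < γ * (ρ + L) := by positivity
  have h2 : 2 * ρ * L / (γ * (ρ + L)) * ‖x - y‖ ^ 2
      + 2 / (γ * (ρ + L)) * ‖gradf x - gradf y‖ ^ 2
      ≤ 2 / γ * ⟪gradf x - gradf y, x - y⟫ := by
    rw [div_mul_eq_mul_div, div_mul_eq_mul_div, ← add_div,
      div_mul_eq_mul_div, div_le_div_iff₀ hpos hγ]
    nlinarith [mul_le_mul_of_nonneg_left (key x y) (by positivity : (0:ℝ) ≤ 2 * γ)]
  have h5 : 2 * (1 / γ * ⟪gradf x - gradf y, x - y⟫)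
      = 2 / γ * ⟪gradf x - gradf y, x - y⟫ := by ring
  rw [h5]
  nlinarith [h2]
end

section
/- (Contraction factor of the gradient step.) Suppose f is ρ-strongly convex (i.e. u ↦ f(u) − (ρ/2)·‖u‖² is convex) with ρ > 0 and ∇f is Lipschitz continuous with constant L > 0. If γ ≥ (ρ + L)/2, then the gradient-step map G_γ(x) := x − (1/γ)·∇f(x) is Lipschitz continuous with constant √(1 − 2ρL/(γ·(ρ + L))); in particular this constant lies in [0, 1) so G_γ is a strict contraction. -/
open scoped RealInnerProductSpace

section Stmt14Aux

variable {E : Type*} [NormedAddCommGroup E] [InnerProductSpace ℝ E]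

lemma stmt14_lineDeriv (Φ : E → ℝ) (g : E → E)
    (hΦ : ∀ x, HasFDerivAt Φ (innerSL ℝ (g x)) x) (x v : E) (t : ℝ) :
    HasDerivAt (fun s : ℝ => Φ (x + s • v)) ⟪g (x + t • v), v⟫ t := by
  have hc : HasDerivAt (fun s : ℝ => x + s • v) v t := by
    simpa using ((hasDerivAt_id t).smul_const v).const_add x
  exact (by simpa using (hΦ (x + t • v)).comp_hasDerivAt t hc :
    HasDerivAt (Φ ∘ fun s : ℝ => x + s • v) ⟪g (x + t • v), v⟫ t)

lemma stmt14_subgrad (Φ : E → ℝ) (g : E → E)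
    (hΦ : ∀ x, HasFDerivAt Φ (innerSL ℝ (g x)) x)
    (hconv : ConvexOn ℝ Set.univ Φ) (x y : E) :
    Φ x + ⟪g x, y - x⟫ ≤ Φ y := by
  rcases eq_or_ne x y with rfl | hxy
  · simp
  · set q : ℝ → ℝ := fun s => Φ (x + s • (y - x)) with hqdef
    have hq0 : HasDerivAt q ⟪g x, y - x⟫ 0 := by
      simpa using stmt14_lineDeriv Φ g hΦ x (y - x) 0
    have hqc : ConvexOn ℝ Set.univ q := by
      have := hconv.comp_affineMap (AffineMap.lineMap x y : ℝ →ᵃ[ℝ] E)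
      have heq : q = Φ ∘ (AffineMap.lineMap x y : ℝ →ᵃ[ℝ] E) := by
        funext s
        simp only [Function.comp_apply, AffineMap.lineMap_apply_module, hqdef]
        congr 1
        rw [smul_sub, sub_smul, one_smul]; abel
      rw [heq]
      simpa using this
    have h := hqc.le_slope_of_hasDerivAt (Set.mem_univ 0) (Set.mem_univ 1) one_pos hq0
    have hs : slope q 0 1 = Φ y - Φ x := by
      simp [slope, hqdef]
    rw [hs] at h
    linarith

lemma stmt14_convex_of_mono (Φ : E → ℝ) (g : E → E)
    (hΦ : ∀ x, HasFDerivAt Φ (innerSL ℝ (g x)) x)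
    (hmono : ∀ x y : E, 0 ≤ ⟪g x - g y, x - y⟫) :
    ConvexOn ℝ Set.univ Φ := by
  refine ⟨convex_univ, ?_⟩
  intro x _ y _ a b ha hb hab
  set v := y - x with hv
  set q : ℝ → ℝ := fun s => Φ (x + s • v) with hqdef
  have hq : ∀ t : ℝ, HasDerivAt q ⟪g (x + t • v), v⟫ t :=
    fun t => stmt14_lineDeriv Φ g hΦ x v t
  have hdiff : Differentiable ℝ q := fun t => (hq t).differentiableAt
  have hm : Monotone (deriv q) := by
    intro s t hst
    rw [(hq s).deriv, (hq t).deriv]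
    rcases eq_or_lt_of_le hst with rfl | hlt
    · exact le_rfl
    · have h0 := hmono (x + t • v) (x + s • v)
      have hd : (x + t • v) - (x + s • v) = (t - s) • v := by
        rw [sub_smul]; abel
      rw [hd, real_inner_smul_right, inner_sub_left] at h0
      nlinarith [h0]
  have hqc : ConvexOn ℝ Set.univ q := hm.convexOn_univ_of_deriv hdiff
  have h := hqc.2 (Set.mem_univ (0:ℝ)) (Set.mem_univ (1:ℝ)) ha hb hab
  have hkey : a • x + b • y = x + b • v := by
    have haa : a = 1 - b := by linarith
    rw [haa, hv, smul_sub, sub_smul, one_smul]; abel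
  have hb01 : a • (0:ℝ) + b • (1:ℝ) = b := by simp
  rw [hb01] at h
  have e1 : q b = Φ (a • x + b • y) := by rw [hkey]
  have e2 : q 0 = Φ x := by simp [hqdef]
  have e3 : q 1 = Φ y := by simp [hqdef, hv]
  rw [e1, e2, e3] at h
  simpa using h

lemma stmt14_half (M : ℝ) (hM : 0 < M) (φ : E → ℝ) (gφ : E → E)
    (lower : ∀ p q : E, φ p + ⟪gφ p, q - p⟫ ≤ φ q)
    (upper : ∀ p q : E, φ q ≤ φ p + ⟪gφ p, q - p⟫ + (M/2) * ‖q - p‖^2)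
    (x y : E) :
    φ y + ⟪gφ y, x - y⟫ + (1/(2*M)) * ‖gφ x - gφ y‖^2 ≤ φ x := by
  set a := gφ x with ha
  set b := gφ y with hb
  set z := x - M⁻¹ • (a - b) with hz
  have h1 := lower y z
  have h2 := upper x z
  have hzx : z - x = -(M⁻¹ • (a - b)) := by rw [hz]; abel
  have hzy : z - y = (x - y) - M⁻¹ • (a - b) := by rw [hz]; abel
  have e1 : ⟪a, z - x⟫ = -(M⁻¹ * ⟪a, a - b⟫) := by
    rw [hzx, inner_neg_right, real_inner_smul_right]
  have e2 : ‖z - x‖^2 = M⁻¹^2 * ‖a - b‖^2 := by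
    rw [hzx, norm_neg, norm_smul, Real.norm_eq_abs, abs_of_pos (by positivity), mul_pow]
  have e3 : ⟪b, z - y⟫ = ⟪b, x - y⟫ - M⁻¹ * ⟪b, a - b⟫ := by
    rw [hzy, inner_sub_right, real_inner_smul_right]
  have e4 : ⟪a, a - b⟫ - ⟪b, a - b⟫ = ‖a - b‖^2 := by
    rw [← inner_sub_left, real_inner_self_eq_norm_sq]
  rw [e1, e2] at h2
  rw [e3] at h1
  have h5 : (M/2) * (M⁻¹^2 * ‖a-b‖^2) = (1/(2*M)) * ‖a-b‖^2 := by
    field_simp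
  have h6 : M⁻¹ * ⟪a, a - b⟫ = M⁻¹ * ⟪b, a - b⟫ + M⁻¹ * ‖a - b‖^2 := by
    rw [← mul_add]
    congr 1
    linarith [e4]
  have h7 : M⁻¹ * ‖a - b‖^2 = 2 * ((1/(2*M)) * ‖a - b‖^2) := by
    field_simp
  linarith [h1, h2, h5, h6, h7]

lemma stmt14_cocoercive (M : ℝ) (hM : 0 < M) (φ : E → ℝ) (gφ : E → E)
    (lower : ∀ p q : E, φ p + ⟪gφ p, q - p⟫ ≤ φ q)
    (upper : ∀ p q : E, φ q ≤ φ p + ⟪gφ p, q - p⟫ + (M/2) * ‖q - p‖^2)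
    (x y : E) :
    M⁻¹ * ‖gφ x - gφ y‖^2 ≤ ⟪gφ x - gφ y, x - y⟫ := by
  have hA := stmt14_half M hM φ gφ lower upper x y
  have hB := stmt14_half M hM φ gφ lower upper y x
  have e1 : ‖gφ y - gφ x‖^2 = ‖gφ x - gφ y‖^2 := by rw [norm_sub_rev]
  rw [e1] at hB
  have e2 : ⟪gφ x - gφ y, x - y⟫ = ⟪gφ x, x - y⟫ - ⟪gφ y, x - y⟫ :=
    inner_sub_left _ _ _
  have e3 : ⟪gφ x, y - x⟫ = -⟪gφ x, x - y⟫ := by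
    rw [← inner_neg_right]; congr 1; abel
  have e4 : M⁻¹ = 2 * (1/(2*M)) := by field_simp
  rw [e2, e4]
  rw [e3] at hB
  linarith [hA, hB]

lemma stmt14_normsq_deriv (u : E) :
    HasFDerivAt (fun w : E => ‖w‖ ^ 2) (innerSL ℝ ((2:ℝ) • u)) u := by
  have h := (hasStrictFDerivAt_norm_sq u).hasFDerivAt
  convert h using 1
  ext v
  simp [real_inner_smul_left, two_smul, inner_add_left]

lemma stmt14_comb (c : ℝ) (w1 w2 : E) :
    innerSL ℝ w1 - c • innerSL ℝ w2 = innerSL ℝ (w1 - c • w2) := by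
  ext v
  simp [inner_sub_left, real_inner_smul_left]

lemma stmt14_comb' (c : ℝ) (w1 w2 : E) :
    c • innerSL ℝ w2 - innerSL ℝ w1 = innerSL ℝ (c • w2 - w1) := by
  ext v
  simp [inner_sub_left, real_inner_smul_left]

end Stmt14Aux

set_option maxHeartbeats 1000000 in
/-- Contraction factor of the gradient step: if `f` is
`ρ`-strongly convex with `L`-Lipschitz gradient and `γ ≥ (ρ+L)/2`, then
`G_γ(x) = x − (1/γ)·∇f(x)` is Lipschitz with constant
`√(1 − 2ρL/(γ(ρ+L)))`, and this constant lies in `[0, 1)`. -/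
theorem stmt14
    {E : Type*} [NormedAddCommGroup E] [InnerProductSpace ℝ E]
    (f : E → ℝ) (gradf : E → E)
    (hgrad : ∀ x : E, HasFDerivAt f (innerSL ℝ (gradf x)) x)
    (ρ L : ℝ) (hρ : 0 < ρ) (hL : 0 < L)
    (hsc : ConvexOn ℝ Set.univ (fun u : E => f u - (ρ / 2) * ‖u‖ ^ 2))
    (hlip : ∀ x y : E, ‖gradf x - gradf y‖ ≤ L * ‖x - y‖)
    (γ : ℝ) (hγ : γ ≥ (ρ + L) / 2)
    (G : E → E) (hG : ∀ x : E, G x = x - (1 / γ) • gradf x) :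
    (∀ x y : E, ‖G x - G y‖ ≤
        Real.sqrt (1 - 2 * ρ * L / (γ * (ρ + L))) * ‖x - y‖) ∧
      0 ≤ Real.sqrt (1 - 2 * ρ * L / (γ * (ρ + L))) ∧
      Real.sqrt (1 - 2 * ρ * L / (γ * (ρ + L))) < 1 := by
  have hγpos : 0 < γ := lt_of_lt_of_le (by positivity) hγ
  have hP : (0:ℝ) < ρ + L := by linarith
  -- gradients of auxiliary functions
  set φ : E → ℝ := fun u => f u - (ρ / 2) * ‖u‖ ^ 2 with hφdef
  set gφ : E → E := fun u => gradf u - ρ • u with hgφdef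
  set ψ : E → ℝ := fun u => (L / 2) * ‖u‖ ^ 2 - f u with hψdef
  set gψ : E → E := fun u => L • u - gradf u with hgψdef
  have hφ : ∀ u : E, HasFDerivAt φ (innerSL ℝ (gφ u)) u := by
    intro u
    have h := (hgrad u).sub ((stmt14_normsq_deriv u).const_mul (ρ / 2))
    rw [stmt14_comb] at h
    have he : gradf u - (ρ / 2) • ((2:ℝ) • u) = gφ u := by
      rw [smul_smul, hgφdef]
      norm_num
    rwa [he] at h
  have hψ : ∀ u : E, HasFDerivAt ψ (innerSL ℝ (gψ u)) u := by
    intro u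
    have h := ((stmt14_normsq_deriv u).const_mul (L / 2)).sub (hgrad u)
    rw [stmt14_comb'] at h
    have he : (L / 2) • ((2:ℝ) • u) - gradf u = gψ u := by
      rw [smul_smul, hgψdef]
      norm_num
    rwa [he] at h
  have hψconv : ConvexOn ℝ Set.univ ψ := by
    apply stmt14_convex_of_mono ψ gψ hψ
    intro p q
    have h1 : gψ p - gψ q = L • (p - q) - (gradf p - gradf q) := by
      simp only [hgψdef, smul_sub]; abel
    rw [h1, inner_sub_left, real_inner_smul_left, real_inner_self_eq_norm_sq]
    have h2 : ⟪gradf p - gradf q, p - q⟫ ≤ ‖gradf p - gradf q‖ * ‖p - q‖ :=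
      real_inner_le_norm _ _
    have h3 := mul_le_mul_of_nonneg_right (hlip p q) (norm_nonneg (p - q))
    nlinarith [h2, h3]
  have lowerφ : ∀ p q : E, φ p + ⟪gφ p, q - p⟫ ≤ φ q :=
    fun p q => stmt14_subgrad φ gφ hφ hsc p q
  have lowerψ : ∀ p q : E, ψ p + ⟪gψ p, q - p⟫ ≤ ψ q :=
    fun p q => stmt14_subgrad ψ gψ hψ hψconv p q
  -- the descent (upper) inequality for φ with constant L - ρ
  have upperφ : ∀ p q : E, φ q ≤ φ p + ⟪gφ p, q - p⟫ + ((L - ρ)/2) * ‖q - p‖^2 := by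
    intro p q
    have h := lowerψ p q
    simp only [hψdef, hφdef, hgψdef, hgφdef] at h ⊢
    rw [inner_sub_left, real_inner_smul_left] at h
    rw [inner_sub_left, real_inner_smul_left]
    have hns : ‖q - p‖^2 = ‖q‖^2 - 2 * ⟪p, q - p⟫ - ‖p‖^2 := by
      rw [@norm_sub_sq_real, inner_sub_right, real_inner_self_eq_norm_sq,
        real_inner_comm p q]
      ring
    rw [hns]
    linarith [h]
  -- the key inequality
  have key : ∀ x y : E, ρ * L * ‖x - y‖^2 + ‖gradf x - gradf y‖^2
      ≤ (ρ + L) * ⟪gradf x - gradf y, x - y⟫ := by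
    intro x y
    set d := x - y with hd
    set g := gradf x - gradf y with hg
    set u := gφ x - gφ y with hu
    have hueq : u = g - ρ • d := by
      simp only [hu, hgφdef, hg, hd, smul_sub]; abel
    have huexp : ‖u‖^2 = ‖g‖^2 - 2 * (ρ * ⟪g, d⟫) + ρ^2 * ‖d‖^2 := by
      rw [hueq, @norm_sub_sq_real, real_inner_smul_right, norm_smul,
        Real.norm_eq_abs, abs_of_pos hρ, mul_pow]
    have huid : ⟪u, d⟫ = ⟪g, d⟫ - ρ * ‖d‖^2 := by
      rw [hueq, inner_sub_left, real_inner_smul_left, real_inner_self_eq_norm_sq]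
    have hstrong : ρ * ‖d‖^2 ≤ ⟪g, d⟫ := by
      have h1 := lowerφ x y
      have h2 := lowerφ y x
      have e1 : ⟪gφ x, y - x⟫ = -⟪gφ x, x - y⟫ := by
        rw [← inner_neg_right]; congr 1; abel
      rw [e1] at h1
      have hmon : 0 ≤ ⟪u, d⟫ := by
        rw [hu, inner_sub_left]
        linarith [h1, h2]
      rw [huid] at hmon
      linarith
    have hg2 : ‖g‖^2 ≤ L^2 * ‖d‖^2 := by
      have := mul_le_mul (hlip x y) (hlip x y) (norm_nonneg _) (by positivity)
      calc ‖g‖^2 = ‖g‖ * ‖g‖ := by ring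
        _ ≤ (L * ‖d‖) * (L * ‖d‖) := this
        _ = L^2 * ‖d‖^2 := by ring
    rcases lt_or_ge ρ L with hcase | hcase
    · -- co-coercivity case
      have hM : (0:ℝ) < L - ρ := by linarith
      have hco := stmt14_cocoercive (L - ρ) hM φ gφ lowerφ upperφ x y
      rw [← hu, huid] at hco
      have hco' := mul_le_mul_of_nonneg_left hco (le_of_lt hM)
      rw [← mul_assoc, mul_inv_cancel₀ (ne_of_gt hM), one_mul] at hco'
      rw [huexp] at hco'
      nlinarith [hco']
    · -- degenerate case L ≤ ρ : the gradient difference is ρ • d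
      have hu0 : ‖u‖^2 ≤ 0 := by
        have ha1 := mul_le_mul_of_nonneg_left hstrong (by positivity : (0:ℝ) ≤ 2 * ρ)
        have ha2 : 0 ≤ (ρ - L) * (ρ + L) * ‖d‖^2 :=
          mul_nonneg (mul_nonneg (by linarith) (by linarith)) (sq_nonneg _)
        rw [huexp]
        nlinarith [hg2, ha1, ha2]
      have hu0' : u = 0 := by
        have h0 : ‖u‖^2 = 0 := le_antisymm hu0 (by positivity)
        exact norm_eq_zero.mp (pow_eq_zero_iff two_ne_zero |>.mp h0)
      have hgd : g = ρ • d := by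
        have h1 : g - ρ • d = 0 := hueq ▸ hu0'
        rwa [sub_eq_zero] at h1
      have hIn : ⟪g, d⟫ = ρ * ‖d‖^2 := by
        rw [hgd, real_inner_smul_left, real_inner_self_eq_norm_sq]
      have hGn : ‖g‖^2 = ρ^2 * ‖d‖^2 := by
        rw [hgd, norm_smul, Real.norm_eq_abs, abs_of_pos hρ, mul_pow]
      rw [hIn, hGn]
      have : ρ * L * ‖d‖^2 + ρ^2 * ‖d‖^2 = (ρ + L) * (ρ * ‖d‖^2) := by ring
      linarith
  -- the contraction constant
  have hsub : 2 * ρ * L ≤ γ * (ρ + L) := by nlinarith [sq_nonneg (ρ - L)]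
  have hc0 : 0 ≤ 1 - 2 * ρ * L / (γ * (ρ + L)) := by
    rw [sub_nonneg, div_le_one (by positivity)]
    exact hsub
  refine ⟨?_, Real.sqrt_nonneg _, ?_⟩
  · intro x y
    set d := x - y with hd
    set g := gradf x - gradf y with hg
    have hGxy : G x - G y = d - (1/γ) • g := by
      rw [hG x, hG y, hg, hd, smul_sub]; abel
    have hexp : ‖G x - G y‖^2
        = ‖d‖^2 - 2 * ((1/γ) * ⟪g, d⟫) + (1/γ)^2 * ‖g‖^2 := by
      rw [hGxy, @norm_sub_sq_real, real_inner_smul_right, norm_smul,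
        Real.norm_eq_abs, abs_of_pos (by positivity), mul_pow, real_inner_comm]
    have hkey := key x y
    rw [← hd, ← hg] at hkey
    have hsq : ‖G x - G y‖^2 ≤ (1 - 2 * ρ * L / (γ * (ρ + L))) * ‖d‖^2 := by
      rw [hexp]
      have expand : (1 - 2 * ρ * L / (γ * (ρ + L))) * ‖d‖^2
          - (‖d‖^2 - 2 * ((1/γ) * ⟪g, d⟫) + (1/γ)^2 * ‖g‖^2)
          = (2 * γ * (ρ + L) * ⟪g, d⟫ - 2 * ρ * L * γ * ‖d‖^2 - (ρ + L) * ‖g‖^2)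
            / (γ^2 * (ρ + L)) := by
        field_simp
        ring
      have hnum : 0 ≤ 2 * γ * (ρ + L) * ⟪g, d⟫ - 2 * ρ * L * γ * ‖d‖^2
          - (ρ + L) * ‖g‖^2 := by
        have h1 := mul_le_mul_of_nonneg_left hkey (by linarith : (0:ℝ) ≤ 2 * γ)
        have h2 : (ρ + L) * ‖g‖^2 ≤ 2 * γ * ‖g‖^2 :=
          mul_le_mul_of_nonneg_right (by linarith) (sq_nonneg _)
        nlinarith [h1, h2]
      have h9 : 0 ≤ (2 * γ * (ρ + L) * ⟪g, d⟫ - 2 * ρ * L * γ * ‖d‖^2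
          - (ρ + L) * ‖g‖^2) / (γ^2 * (ρ + L)) :=
        div_nonneg hnum (by positivity)
      linarith [expand, h9]
    have h10 : ‖G x - G y‖ = Real.sqrt (‖G x - G y‖^2) :=
      (Real.sqrt_sq (norm_nonneg _)).symm
    rw [h10]
    calc Real.sqrt (‖G x - G y‖^2)
        ≤ Real.sqrt ((1 - 2 * ρ * L / (γ * (ρ + L))) * ‖d‖^2) :=
          Real.sqrt_le_sqrt hsq
      _ = Real.sqrt (1 - 2 * ρ * L / (γ * (ρ + L))) * ‖d‖ := by
          rw [Real.sqrt_mul hc0, Real.sqrt_sq (norm_nonneg _)]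
  · refine (Real.sqrt_lt' one_pos).mpr ?_
    have : 0 < 2 * ρ * L / (γ * (ρ + L)) := by positivity
    rw [one_pow]
    linarith
end
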